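/- Gaussian elimination for cochain complexes (Bar-Natan): Let 𝒞 be a preadditive category with binary biproducts and let (C, c) be a cochain complex over 𝒞 indexed by ℤ. Suppose that for some fixed n we have decompositions C^n = A^n ⊕ B^n and C^{n+1} = A^{n+1} ⊕ B^{n+1}, and that with respect to these decompositions the differentials are given by c_{n-1} = (α, β)^T : C^{n-1} → A^n ⊕ B^n, c_n = [[φ, δ], [γ, ε]] : A^n ⊕ B^n → A^{n+1} ⊕ B^{n+1}, and c_{n+1} = (μ, ν) : A^{n+1} ⊕ B^{n+1} → C^{n+2}, where φ : A^n → A^{n+1} is an isomorphism. Then (C, c) is chain homotopy equivalent to the cochain complex (D, d) with D^k = C^k for k ∉ {n, n+1}, D^n = B^n, D^{n+1} = B^{n+1}, d_k = c_k for k ∉ {n−1, n, n+1}, d_{n−1} = β, d_n = ε − γ ∘ φ^{−1} ∘ δ, and d_{n+1} = ν. -/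

import Mathlib

open CategoryTheory CategoryTheory.Limits

set_option linter.unusedSectionVars false

namespace GaussAux

variable {𝒞 : Type*} [Category 𝒞] [Preadditive 𝒞] [HasBinaryBiproducts 𝒞]

lemma d_cast (C : CochainComplex 𝒞 ℤ) {i i' j j' : ℤ} (hi : i = i') (hj : j = j') :
    C.d i j = eqToHom (congrArg C.X hi) ≫ C.d i' j' ≫ eqToHom (congrArg C.X hj).symm := by
  subst hi; subst hj; simp

variable (C : CochainComplex 𝒞 ℤ) (n : ℤ) {An Bn An1 Bn1 : 𝒞}

section Xdef
variable (Bn Bn1)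

def X' (k : ℤ) : 𝒞 := if k = n then Bn else if k = n + 1 then Bn1 else C.X k

lemma X'_eqn {k : ℤ} (h : k = n) : X' C n Bn Bn1 k = Bn := by
  unfold X'; rw [if_pos h]

lemma X'_eqn1 {k : ℤ} (h : k = n + 1) : X' C n Bn Bn1 k = Bn1 := by
  unfold X'; rw [if_neg (by omega), if_pos h]

lemma X'_eqC {k : ℤ} (h1 : k ≠ n) (h2 : k ≠ n + 1) : X' C n Bn Bn1 k = C.X k := by
  unfold X'; rw [if_neg h1, if_neg h2]

end Xdef

variable (β : C.X (n - 1) ⟶ Bn) (φ : An ⟶ An1) (δ : Bn ⟶ An1) (γ : An ⟶ Bn1)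
  (ε : Bn ⟶ Bn1) (ν : Bn1 ⟶ C.X (n + 2)) [IsIso φ]

noncomputable def d' (k : ℤ) : X' C n Bn Bn1 k ⟶ X' C n Bn Bn1 (k + 1) :=
  if h : k = n then
    eqToHom (X'_eqn C n Bn Bn1 h) ≫ (ε - δ ≫ inv φ ≫ γ) ≫
      eqToHom (X'_eqn1 C n Bn Bn1 (by omega)).symm
  else if h1 : k + 1 = n then
    eqToHom ((X'_eqC C n Bn Bn1 (by omega) (by omega)).trans
        (congrArg C.X (by omega : k = n - 1))) ≫ β ≫
      eqToHom (X'_eqn C n Bn Bn1 h1).symm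
  else if h2 : k = n + 1 then
    eqToHom (X'_eqn1 C n Bn Bn1 h2) ≫ ν ≫
      eqToHom ((X'_eqC C n Bn Bn1 (by omega) (by omega)).trans
        (congrArg C.X (by omega : k + 1 = n + 2))).symm
  else
    eqToHom (X'_eqC C n Bn Bn1 h h2) ≫ C.d k (k + 1) ≫
      eqToHom (X'_eqC C n Bn Bn1 h1 (by omega)).symm

lemma d'_eq_mid {k : ℤ} (h : k = n) :
    d' C n β φ δ γ ε ν k = eqToHom (X'_eqn C n Bn Bn1 h) ≫ (ε - δ ≫ inv φ ≫ γ) ≫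
      eqToHom (X'_eqn1 C n Bn Bn1 (by omega)).symm := by
  unfold d'; rw [dif_pos h]

lemma d'_eq_beta {k : ℤ} (h : k + 1 = n) :
    d' C n β φ δ γ ε ν k =
      eqToHom ((X'_eqC C n Bn Bn1 (by omega) (by omega)).trans
        (congrArg C.X (by omega : k = n - 1))) ≫ β ≫
      eqToHom (X'_eqn C n Bn Bn1 h).symm := by
  unfold d'; rw [dif_neg (by omega), dif_pos h]

lemma d'_eq_nu {k : ℤ} (h : k = n + 1) :
    d' C n β φ δ γ ε ν k =
      eqToHom (X'_eqn1 C n Bn Bn1 h) ≫ ν ≫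
      eqToHom ((X'_eqC C n Bn Bn1 (by omega) (by omega)).trans
        (congrArg C.X (by omega : k + 1 = n + 2))).symm := by
  unfold d'; rw [dif_neg (by omega), dif_neg (by omega), dif_pos h]

lemma d'_eq_of {k : ℤ} (h1 : k ≠ n) (h2 : k + 1 ≠ n) (h3 : k ≠ n + 1) :
    d' C n β φ δ γ ε ν k =
      eqToHom (X'_eqC C n Bn Bn1 h1 h3) ≫ C.d k (k + 1) ≫
      eqToHom (X'_eqC C n Bn Bn1 h2 (by omega)).symm := by
  unfold d'; rw [dif_neg h1, dif_neg h2, dif_neg h3]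

variable (α : C.X (n - 1) ⟶ An) (μ : An1 ⟶ C.X (n + 2))
  (eN : C.X n ≅ An ⊞ Bn) (eN1 : C.X (n + 1) ≅ An1 ⊞ Bn1)

section Comps

variable (hprev : C.d (n - 1) n = biprod.lift α β ≫ eN.inv)
  (hmid : C.d n (n + 1) =
    eN.hom ≫ biprod.desc (biprod.lift φ γ) (biprod.lift δ ε) ≫ eN1.inv)
  (hnext : C.d (n + 1) (n + 2) = eN1.hom ≫ biprod.desc μ ν)

include hprev hmid in
lemma lift_comp_desc : biprod.lift α β ≫
    biprod.desc (biprod.lift φ γ) (biprod.lift δ ε) = 0 := by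
  have h := C.d_comp_d (n - 1) n (n + 1)
  rw [hprev, hmid] at h
  rw [← cancel_mono eN1.inv]
  simpa [Category.assoc] using h

include hprev hmid in
lemma comp1 : α ≫ φ + β ≫ δ = 0 := by
  have h := congrArg (fun t => t ≫ biprod.fst) (lift_comp_desc (hprev := hprev) (hmid := hmid))
  simpa using h

include hprev hmid in
lemma comp2 : α ≫ γ + β ≫ ε = 0 := by
  have h := congrArg (fun t => t ≫ biprod.snd) (lift_comp_desc (hprev := hprev) (hmid := hmid))
  simpa using h

include hmid hnext in
lemma desc_comp_desc : biprod.desc (biprod.lift φ γ) (biprod.lift δ ε) ≫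
    biprod.desc μ ν = 0 := by
  have h := C.d_comp_d n (n + 1) (n + 2)
  rw [hmid, hnext] at h
  rw [← cancel_epi eN.hom]
  simpa [Category.assoc] using h

include hmid hnext in
lemma comp3 : φ ≫ μ + γ ≫ ν = 0 := by
  have h := congrArg (fun t => biprod.inl ≫ t)
    (desc_comp_desc (hmid := hmid) (hnext := hnext))
  simpa using h

include hmid hnext in
lemma comp4 : δ ≫ μ + ε ≫ ν = 0 := by
  have h := congrArg (fun t => biprod.inr ≫ t)
    (desc_comp_desc (hmid := hmid) (hnext := hnext))
  simpa using h

include hprev in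
lemma compbeta (i : ℤ) : C.d i (n - 1) ≫ β = 0 := by
  have h := C.d_comp_d i (n - 1) n
  rw [hprev] at h
  have h' : C.d i (n - 1) ≫ biprod.lift α β = 0 := by
    rw [← cancel_mono eN.inv]; simpa [Category.assoc] using h
  have := congrArg (fun t => t ≫ biprod.snd) h'
  simpa using this

include hnext in
lemma compnu (j : ℤ) : ν ≫ C.d (n + 2) j = 0 := by
  have h := C.d_comp_d (n + 1) (n + 2) j
  rw [hnext] at h
  have h' : biprod.desc μ ν ≫ C.d (n + 2) j = 0 := by
    rw [← cancel_epi eN1.hom]; simpa [Category.assoc] using h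
  have := congrArg (fun t => biprod.inr ≫ t) h'
  simpa using this

include hprev hmid hnext in
lemma key_mid_nu : (ε - δ ≫ inv φ ≫ γ) ≫ ν = 0 := by
  have c3 := comp3 (hmid := hmid) (hnext := hnext)
  have c4 := comp4 (hmid := hmid) (hnext := hnext)
  have hγν : γ ≫ ν = -(φ ≫ μ) := eq_neg_of_add_eq_zero_right c3
  have hεν : ε ≫ ν = -(δ ≫ μ) := eq_neg_of_add_eq_zero_right c4
  simp only [Preadditive.sub_comp, Category.assoc, hγν, hεν]
  simp

include hprev hmid in
lemma key_beta_mid : β ≫ (ε - δ ≫ inv φ ≫ γ) = 0 := by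
  have c1 := comp1 (hprev := hprev) (hmid := hmid)
  have c2 := comp2 (hprev := hprev) (hmid := hmid)
  have hβδ : β ≫ δ = -(α ≫ φ) := eq_neg_of_add_eq_zero_right c1
  have hβε : β ≫ ε = -(α ≫ γ) := eq_neg_of_add_eq_zero_right c2
  simp only [Preadditive.comp_sub, ← Category.assoc, hβδ, hβε]
  simp

include hprev hmid hnext in
lemma d'_comp (k : ℤ) :
    d' C n β φ δ γ ε ν k ≫ d' C n β φ δ γ ε ν (k + 1) = 0 := by
  by_cases hk : k = n
  · rw [d'_eq_mid C n β φ δ γ ε ν hk, d'_eq_nu C n β φ δ γ ε ν (show k + 1 = n + 1 by omega)]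
    simp only [Category.assoc, eqToHom_trans_assoc, eqToHom_trans, eqToHom_refl, Category.id_comp]
    rw [reassoc_of% key_mid_nu (hprev := hprev) (hmid := hmid) (hnext := hnext)]
    simp
  · by_cases hk1 : k + 1 = n
    · rw [d'_eq_beta C n β φ δ γ ε ν hk1, d'_eq_mid C n β φ δ γ ε ν hk1]
      simp only [Category.assoc, eqToHom_trans_assoc, eqToHom_trans, eqToHom_refl, Category.id_comp]
      rw [reassoc_of% key_beta_mid (hprev := hprev) (hmid := hmid)]
      simp
    · by_cases hk2 : k = n + 1
      · rw [d'_eq_nu C n β φ δ γ ε ν hk2,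
          d'_eq_of C n β φ δ γ ε ν (k := k + 1) (by omega) (by omega) (by omega),
          d_cast C (show k + 1 = n + 2 by omega) (rfl : k + 1 + 1 = k + 1 + 1)]
        simp only [Category.assoc, eqToHom_trans_assoc, eqToHom_trans, eqToHom_refl, Category.id_comp]
        rw [reassoc_of% compnu (hnext := hnext) (j := k + 1 + 1)]
        simp
      · by_cases hk3 : k + 1 + 1 = n
        · rw [d'_eq_of C n β φ δ γ ε ν (k := k) (by omega) (by omega) (by omega),
            d'_eq_beta C n β φ δ γ ε ν hk3,
            d_cast C (rfl : k = k) (show k + 1 = n - 1 by omega)]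
          simp only [Category.assoc, eqToHom_trans_assoc, eqToHom_trans, eqToHom_refl, Category.id_comp]
          rw [reassoc_of% compbeta (hprev := hprev) (i := k)]
          simp
        · rw [d'_eq_of C n β φ δ γ ε ν (k := k) (by omega) (by omega) (by omega),
            d'_eq_of C n β φ δ γ ε ν (k := k + 1) (by omega) (by omega) (by omega)]
          simp only [Category.assoc, eqToHom_trans_assoc, eqToHom_trans, eqToHom_refl, Category.id_comp]
          rw [reassoc_of% C.d_comp_d k (k + 1) (k + 1 + 1)]
          simp

@[reducible] noncomputable def D' : CochainComplex 𝒞 ℤ where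
  X := X' C n Bn Bn1
  d i j := if h : i + 1 = j then
      d' C n β φ δ γ ε ν i ≫ eqToHom (congrArg (X' C n Bn Bn1) h) else 0
  shape i j h := dif_neg h
  d_comp_d' i j k hij hjk := by
    obtain rfl : i + 1 = j := hij
    obtain rfl : i + 1 + 1 = k := hjk
    simp only [dif_pos rfl, eqToHom_refl, Category.comp_id]
    exact d'_comp C n β φ δ γ ε ν α μ eN eN1 hprev hmid hnext i

lemma D'_d (i j : ℤ) (h : i + 1 = j) :
    (D' C n β φ δ γ ε ν α μ eN eN1 hprev hmid hnext).d i j =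
      d' C n β φ δ γ ε ν i ≫ eqToHom (congrArg (X' C n Bn Bn1) h) := dif_pos h

lemma D'_X (k : ℤ) :
    (D' C n β φ δ γ ε ν α μ eN eN1 hprev hmid hnext).X k = X' C n Bn Bn1 k := rfl

end Comps

noncomputable def f' (k : ℤ) : C.X k ⟶ X' C n Bn Bn1 k :=
  if h : k = n then
    eqToHom (congrArg C.X h) ≫ eN.hom ≫ biprod.snd ≫ eqToHom (X'_eqn C n Bn Bn1 h).symm
  else if h1 : k = n + 1 then
    eqToHom (congrArg C.X h1) ≫ eN1.hom ≫ biprod.desc (-(inv φ ≫ γ)) (𝟙 Bn1) ≫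
      eqToHom (X'_eqn1 C n Bn Bn1 h1).symm
  else eqToHom (X'_eqC C n Bn Bn1 h h1).symm

lemma f'_at_n {k : ℤ} (h : k = n) :
    f' C n φ γ eN eN1 k =
      eqToHom (congrArg C.X h) ≫ eN.hom ≫ biprod.snd ≫
        eqToHom (X'_eqn C n Bn Bn1 h).symm := by
  unfold f'; rw [dif_pos h]

lemma f'_at_n1 {k : ℤ} (h : k = n + 1) :
    f' C n φ γ eN eN1 k =
      eqToHom (congrArg C.X h) ≫ eN1.hom ≫ biprod.desc (-(inv φ ≫ γ)) (𝟙 Bn1) ≫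
        eqToHom (X'_eqn1 C n Bn Bn1 h).symm := by
  unfold f'; rw [dif_neg (by omega), dif_pos h]

lemma f'_at_of {k : ℤ} (h : k ≠ n) (h1 : k ≠ n + 1) :
    f' C n φ γ eN eN1 k = eqToHom (X'_eqC C n Bn Bn1 h h1).symm := by
  unfold f'; rw [dif_neg h, dif_neg h1]

noncomputable def g' (k : ℤ) : X' C n Bn Bn1 k ⟶ C.X k :=
  if h : k = n then
    eqToHom (X'_eqn C n Bn Bn1 h) ≫ biprod.lift (-(δ ≫ inv φ)) (𝟙 Bn) ≫ eN.inv ≫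
      eqToHom (congrArg C.X h).symm
  else if h1 : k = n + 1 then
    eqToHom (X'_eqn1 C n Bn Bn1 h1) ≫ biprod.inr ≫ eN1.inv ≫
      eqToHom (congrArg C.X h1).symm
  else eqToHom (X'_eqC C n Bn Bn1 h h1)

lemma g'_at_n {k : ℤ} (h : k = n) :
    g' C n φ δ eN eN1 k =
      eqToHom (X'_eqn C n Bn Bn1 h) ≫ biprod.lift (-(δ ≫ inv φ)) (𝟙 Bn) ≫ eN.inv ≫
        eqToHom (congrArg C.X h).symm := by
  unfold g'; rw [dif_pos h]

lemma g'_at_n1 {k : ℤ} (h : k = n + 1) :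
    g' C n φ δ eN eN1 k =
      eqToHom (X'_eqn1 C n Bn Bn1 h) ≫ biprod.inr ≫ eN1.inv ≫
        eqToHom (congrArg C.X h).symm := by
  unfold g'; rw [dif_neg (by omega), dif_pos h]

lemma g'_at_of {k : ℤ} (h : k ≠ n) (h1 : k ≠ n + 1) :
    g' C n φ δ eN eN1 k = eqToHom (X'_eqC C n Bn Bn1 h h1) := by
  unfold g'; rw [dif_neg h, dif_neg h1]

section Maps

variable (hprev : C.d (n - 1) n = biprod.lift α β ≫ eN.inv)
  (hmid : C.d n (n + 1) =
    eN.hom ≫ biprod.desc (biprod.lift φ γ) (biprod.lift δ ε) ≫ eN1.inv)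
  (hnext : C.d (n + 1) (n + 2) = eN1.hom ≫ biprod.desc μ ν)

lemma core1 : biprod.snd ≫ (ε - δ ≫ inv φ ≫ γ) =
    biprod.desc (biprod.lift φ γ) (biprod.lift δ ε) ≫
      biprod.desc (-(inv φ ≫ γ)) (𝟙 Bn1) := by
  ext
  · simp
  · simp [Preadditive.comp_sub]
    abel

include hmid hnext in
lemma core2 : biprod.desc (-(inv φ ≫ γ)) (𝟙 Bn1) ≫ ν = biprod.desc μ ν := by
  have c3 := comp3 (hmid := hmid) (hnext := hnext)
  have hγν : γ ≫ ν = -(φ ≫ μ) := eq_neg_of_add_eq_zero_right c3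
  ext
  · simp [hγν]
  · simp

lemma core3 : biprod.lift (-(δ ≫ inv φ)) (𝟙 Bn) ≫
    biprod.desc (biprod.lift φ γ) (biprod.lift δ ε) =
      (ε - δ ≫ inv φ ≫ γ) ≫ biprod.inr := by
  apply biprod.hom_ext
  · simp
  · simp [Preadditive.sub_comp]
    abel

include hprev hmid in
lemma core4 : β ≫ biprod.lift (-(δ ≫ inv φ)) (𝟙 Bn) = biprod.lift α β := by
  have c1 := comp1 (hprev := hprev) (hmid := hmid)
  have hβδ : β ≫ δ = -(α ≫ φ) := eq_neg_of_add_eq_zero_right c1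
  apply biprod.hom_ext
  · have h2 := reassoc_of% hβδ
    simp [h2]
  · simp

include hprev hmid hnext in
lemma F_comm (i j : ℤ) (hij : i + 1 = j) :
    f' C n φ γ eN eN1 i ≫ (D' C n β φ δ γ ε ν α μ eN eN1 hprev hmid hnext).d i j =
      C.d i j ≫ f' C n φ γ eN eN1 j := by
  obtain rfl : i + 1 = j := hij
  rw [D'_d C n β φ δ γ ε ν α μ eN eN1 hprev hmid hnext i (i + 1) rfl]
  simp only [eqToHom_refl, Category.comp_id]
  by_cases hk : i = n
  · rw [f'_at_n C n φ γ eN eN1 hk, d'_eq_mid C n β φ δ γ ε ν hk,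
      f'_at_n1 C n φ γ eN eN1 (show i + 1 = n + 1 by omega),
      d_cast C hk (show i + 1 = n + 1 by omega), hmid]
    simp only [Category.assoc, eqToHom_trans_assoc, eqToHom_trans, eqToHom_refl, Category.id_comp,
      Iso.inv_hom_id_assoc]
    rw [reassoc_of% core1 φ δ γ ε]
  · by_cases hk1 : i + 1 = n
    · rw [f'_at_of C n φ γ eN eN1 (by omega) (by omega), d'_eq_beta C n β φ δ γ ε ν hk1,
        f'_at_n C n φ γ eN eN1 hk1, d_cast C (show i = n - 1 by omega) hk1, hprev]
      simp only [Category.assoc, eqToHom_trans_assoc, eqToHom_trans, eqToHom_refl, Category.id_comp,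
        Iso.inv_hom_id_assoc, biprod.lift_snd_assoc]
    · by_cases hk2 : i = n + 1
      · rw [f'_at_n1 C n φ γ eN eN1 hk2, d'_eq_nu C n β φ δ γ ε ν hk2,
          f'_at_of C n φ γ eN eN1 (k := i + 1) (by omega) (by omega),
          d_cast C hk2 (show i + 1 = n + 2 by omega), hnext]
        simp only [Category.assoc, eqToHom_trans_assoc, eqToHom_trans, eqToHom_refl, Category.id_comp,
          Iso.inv_hom_id_assoc]
        rw [reassoc_of% core2 C n φ δ γ ε ν μ eN eN1 hmid hnext]
      · rw [f'_at_of C n φ γ eN eN1 hk hk2,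
          d'_eq_of C n β φ δ γ ε ν (k := i) hk hk1 hk2,
          f'_at_of C n φ γ eN eN1 (k := i + 1) hk1 (by omega)]
        simp

include hprev hmid hnext in
lemma G_comm (i j : ℤ) (hij : i + 1 = j) :
    g' C n φ δ eN eN1 i ≫ C.d i j =
      (D' C n β φ δ γ ε ν α μ eN eN1 hprev hmid hnext).d i j ≫ g' C n φ δ eN eN1 j := by
  obtain rfl : i + 1 = j := hij
  rw [D'_d C n β φ δ γ ε ν α μ eN eN1 hprev hmid hnext i (i + 1) rfl]
  simp only [eqToHom_refl, Category.comp_id]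
  by_cases hk : i = n
  · rw [g'_at_n C n φ δ eN eN1 hk, d'_eq_mid C n β φ δ γ ε ν hk,
      g'_at_n1 C n φ δ eN eN1 (show i + 1 = n + 1 by omega),
      d_cast C hk (show i + 1 = n + 1 by omega), hmid]
    simp only [Category.assoc, eqToHom_trans_assoc, eqToHom_trans, eqToHom_refl, Category.id_comp,
      Iso.inv_hom_id_assoc]
    rw [reassoc_of% core3 φ δ γ ε]
  · by_cases hk1 : i + 1 = n
    · rw [g'_at_of C n φ δ eN eN1 (by omega) (by omega), d'_eq_beta C n β φ δ γ ε ν hk1,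
        g'_at_n C n φ δ eN eN1 hk1, d_cast C (show i = n - 1 by omega) hk1, hprev]
      simp only [Category.assoc, eqToHom_trans_assoc, eqToHom_trans, eqToHom_refl, Category.id_comp,
        Iso.inv_hom_id_assoc]
      rw [reassoc_of% core4 C n β φ δ γ ε α eN eN1 hprev hmid]
    · by_cases hk2 : i = n + 1
      · rw [g'_at_n1 C n φ δ eN eN1 hk2, d'_eq_nu C n β φ δ γ ε ν hk2,
          g'_at_of C n φ δ eN eN1 (k := i + 1) (by omega) (by omega),
          d_cast C hk2 (show i + 1 = n + 2 by omega), hnext]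
        simp only [Category.assoc, eqToHom_trans_assoc, eqToHom_trans, eqToHom_refl, Category.id_comp,
          Iso.inv_hom_id_assoc, biprod.inr_desc_assoc]
      · rw [g'_at_of C n φ δ eN eN1 hk hk2,
          d'_eq_of C n β φ δ γ ε ν (k := i) hk hk1 hk2,
          g'_at_of C n φ δ eN eN1 (k := i + 1) hk1 (by omega)]
        simp

noncomputable def Fhom :
    C ⟶ D' C n β φ δ γ ε ν α μ eN eN1 hprev hmid hnext where
  f := f' C n φ γ eN eN1
  comm' i j hij := F_comm C n β φ δ γ ε ν α μ eN eN1 hprev hmid hnext i j hij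

noncomputable def Ghom :
    D' C n β φ δ γ ε ν α μ eN eN1 hprev hmid hnext ⟶ C where
  f := g' C n φ δ eN eN1
  comm' i j hij := G_comm C n β φ δ γ ε ν α μ eN eN1 hprev hmid hnext i j hij

include hprev hmid hnext in
lemma GF_eq_id :
    Ghom C n β φ δ γ ε ν α μ eN eN1 hprev hmid hnext ≫
      Fhom C n β φ δ γ ε ν α μ eN eN1 hprev hmid hnext =
    𝟙 (D' C n β φ δ γ ε ν α μ eN eN1 hprev hmid hnext) := by
  apply HomologicalComplex.hom_ext
  intro i
  show g' C n φ δ eN eN1 i ≫ f' C n φ γ eN eN1 i = 𝟙 _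
  by_cases hk : i = n
  · rw [g'_at_n C n φ δ eN eN1 hk, f'_at_n C n φ γ eN eN1 hk]
    simp
  · by_cases hk1 : i = n + 1
    · rw [g'_at_n1 C n φ δ eN eN1 hk1, f'_at_n1 C n φ γ eN eN1 hk1]
      simp
    · rw [g'_at_of C n φ δ eN eN1 hk hk1, f'_at_of C n φ γ eN eN1 hk hk1]
      simp

noncomputable def h'' (i j : ℤ) : C.X i ⟶ C.X j :=
  if h : i = n + 1 ∧ j = n then
    eqToHom (congrArg C.X h.1) ≫ eN1.hom ≫
      biprod.desc (-(inv φ ≫ biprod.inl)) 0 ≫ eN.inv ≫ eqToHom (congrArg C.X h.2).symm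
  else 0

lemma h''_pos {i j : ℤ} (h1 : i = n + 1) (h2 : j = n) :
    h'' C n φ eN eN1 i j =
      eqToHom (congrArg C.X h1) ≫ eN1.hom ≫
        biprod.desc (-(inv φ ≫ biprod.inl)) 0 ≫ eN.inv ≫
          eqToHom (congrArg C.X h2).symm := by
  unfold h''; rw [dif_pos ⟨h1, h2⟩]

lemma h''_neg {i j : ℤ} (h : ¬(i = n + 1 ∧ j = n)) :
    h'' C n φ eN eN1 i j = 0 := by
  unfold h''; rw [dif_neg h]

lemma core5 : biprod.snd ≫ biprod.lift (-(δ ≫ inv φ)) (𝟙 Bn) =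
    biprod.desc (biprod.lift φ γ) (biprod.lift δ ε) ≫
      biprod.desc (-(inv φ ≫ biprod.inl)) (0 : Bn1 ⟶ An ⊞ Bn) + 𝟙 (An ⊞ Bn) := by
  ext
  · simp
  · simp
  · simp
  · simp

lemma core6 : biprod.desc (-(inv φ ≫ γ)) (𝟙 Bn1) ≫ biprod.inr =
    biprod.desc (-(inv φ ≫ biprod.inl)) (0 : Bn1 ⟶ An ⊞ Bn) ≫
      biprod.desc (biprod.lift φ γ) (biprod.lift δ ε) + 𝟙 (An1 ⊞ Bn1) := by
  ext
  · simp
  · simp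
  · simp
  · simp

include hprev hmid hnext in
lemma FG_comm (i : ℤ) :
    ((Fhom C n β φ δ γ ε ν α μ eN eN1 hprev hmid hnext) ≫
        (Ghom C n β φ δ γ ε ν α μ eN eN1 hprev hmid hnext)).f i =
      dNext i (h'' C n φ eN eN1) + prevD i (h'' C n φ eN eN1) + 𝟙 (C.X i) := by
  have hd : dNext i (h'' C n φ eN eN1) = C.d i (i + 1) ≫ h'' C n φ eN eN1 (i + 1) i :=
    dNext_eq _ (by simp)
  have hp : prevD i (h'' C n φ eN eN1) = h'' C n φ eN eN1 i (i - 1) ≫ C.d (i - 1) i :=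
    prevD_eq _ (by simp)
  rw [hd, hp]
  simp only [HomologicalComplex.comp_f, HomologicalComplex.id_f]
  show f' C n φ γ eN eN1 i ≫ g' C n φ δ eN eN1 i = _
  by_cases hk : i = n
  · rw [h''_pos C n φ eN eN1 (show i + 1 = n + 1 by omega) hk,
      h''_neg C n φ eN eN1 (j := i - 1) (by omega),
      f'_at_n C n φ γ eN eN1 hk, g'_at_n C n φ δ eN eN1 hk,
      d_cast C hk (show i + 1 = n + 1 by omega), hmid]
    simp only [Category.assoc, eqToHom_trans_assoc, eqToHom_trans, eqToHom_refl,
      Category.id_comp, Iso.inv_hom_id_assoc, zero_comp, add_zero]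
    rw [reassoc_of% core5 φ δ γ ε]
    simp [Preadditive.add_comp, Preadditive.comp_add]
  · by_cases hk1 : i = n + 1
    · rw [h''_neg C n φ eN eN1 (i := i + 1) (j := i) (by omega),
        h''_pos C n φ eN eN1 hk1 (show i - 1 = n by omega),
        f'_at_n1 C n φ γ eN eN1 hk1, g'_at_n1 C n φ δ eN eN1 hk1,
        d_cast C (show i - 1 = n by omega) hk1, hmid]
      simp only [Category.assoc, eqToHom_trans_assoc, eqToHom_trans, eqToHom_refl,
        Category.id_comp, Iso.inv_hom_id_assoc, comp_zero, zero_add]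
      rw [reassoc_of% core6 φ δ γ ε]
      simp [Preadditive.add_comp, Preadditive.comp_add]
    · rw [h''_neg C n φ eN eN1 (i := i + 1) (j := i) (by omega),
        h''_neg C n φ eN eN1 (i := i) (j := i - 1) (by omega),
        f'_at_of C n φ γ eN eN1 hk hk1, g'_at_of C n φ δ eN eN1 hk hk1]
      simp

noncomputable def equivCD :
    HomotopyEquiv C (D' C n β φ δ γ ε ν α μ eN eN1 hprev hmid hnext) where
  hom := Fhom C n β φ δ γ ε ν α μ eN eN1 hprev hmid hnext
  inv := Ghom C n β φ δ γ ε ν α μ eN eN1 hprev hmid hnext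
  homotopyHomInvId :=
    { hom := h'' C n φ eN eN1
      zero := fun i j hij => h''_neg C n φ eN eN1 (by rintro ⟨rfl, rfl⟩; exact hij rfl)
      comm := fun i => by simpa using FG_comm C n β φ δ γ ε ν α μ eN eN1 hprev hmid hnext i }
  homotopyInvHomId := Homotopy.ofEq (GF_eq_id C n β φ δ γ ε ν α μ eN eN1 hprev hmid hnext)

end Maps

end GaussAux

open GaussAux in
/-- **Gaussian elimination for cochain complexes** (Bar-Natan). Let `𝒞` be a
preadditive category with binary biproducts and `C` a cochain complex over `𝒞`
indexed by `ℤ`.  Suppose `C.X n ≅ An ⊞ Bn` and `C.X (n+1) ≅ An1 ⊞ Bn1`, and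
that with respect to these decompositions the differentials are
`c_{n-1} = (α, β)ᵀ`, `c_n = [[φ, δ], [γ, ε]]` with `φ` an isomorphism, and
`c_{n+1} = (μ, ν)`.  Then `C` is chain homotopy equivalent to the cochain
complex `D` with `D.X k = C.X k` for `k ∉ {n, n+1}`, `D.X n = Bn`,
`D.X (n+1) = Bn1`, `d_k = c_k` for `k ∉ {n-1, n, n+1}`, `d_{n-1} = β`,
`d_n = ε − γ ∘ φ⁻¹ ∘ δ` and `d_{n+1} = ν`. -/
theorem gaussian_elimination
    {𝒞 : Type*} [Category 𝒞] [Preadditive 𝒞] [HasBinaryBiproducts 𝒞]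
    (C : CochainComplex 𝒞 ℤ) (n : ℤ)
    (An Bn An1 Bn1 : 𝒞)
    (eN : C.X n ≅ An ⊞ Bn) (eN1 : C.X (n + 1) ≅ An1 ⊞ Bn1)
    (α : C.X (n - 1) ⟶ An) (β : C.X (n - 1) ⟶ Bn)
    (φ : An ⟶ An1) (δ : Bn ⟶ An1) (γ : An ⟶ Bn1) (ε : Bn ⟶ Bn1)
    (μ : An1 ⟶ C.X (n + 2)) (ν : Bn1 ⟶ C.X (n + 2))
    [IsIso φ]
    (hprev : C.d (n - 1) n = biprod.lift α β ≫ eN.inv)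
    (hmid : C.d n (n + 1) =
      eN.hom ≫ biprod.desc (biprod.lift φ γ) (biprod.lift δ ε) ≫ eN1.inv)
    (hnext : C.d (n + 1) (n + 2) = eN1.hom ≫ biprod.desc μ ν) :
    ∃ (D : CochainComplex 𝒞 ℤ) (hXn : D.X n = Bn) (hXn1 : D.X (n + 1) = Bn1)
      (hX : ∀ k, k ≠ n → k ≠ n + 1 → D.X k = C.X k),
      (∀ (i : ℤ) (h1 : i ≠ n) (h2 : i ≠ n + 1) (h3 : i + 1 ≠ n) (h4 : i + 1 ≠ n + 1),
          D.d i (i + 1) =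
            eqToHom (hX i h1 h2) ≫ C.d i (i + 1) ≫ eqToHom (hX (i + 1) h3 h4).symm) ∧
      D.d (n - 1) n =
        eqToHom (hX (n - 1) (by omega) (by omega)) ≫ β ≫ eqToHom hXn.symm ∧
      D.d n (n + 1) = eqToHom hXn ≫ (ε - δ ≫ inv φ ≫ γ) ≫ eqToHom hXn1.symm ∧
      D.d (n + 1) (n + 2) =
        eqToHom hXn1 ≫ ν ≫ eqToHom (hX (n + 2) (by omega) (by omega)).symm ∧
      Nonempty (HomotopyEquiv C D) := by
  refine ⟨D' C n β φ δ γ ε ν α μ eN eN1 hprev hmid hnext,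
    X'_eqn C n Bn Bn1 rfl, X'_eqn1 C n Bn Bn1 rfl,
    fun k h1 h2 => X'_eqC C n Bn Bn1 h1 h2, ?_, ?_, ?_, ?_,
    ⟨equivCD C n β φ δ γ ε ν α μ eN eN1 hprev hmid hnext⟩⟩
  · intro i h1 h2 h3 h4
    rw [D'_d C n β φ δ γ ε ν α μ eN eN1 hprev hmid hnext i (i + 1) rfl,
      d'_eq_of C n β φ δ γ ε ν h1 h3 h2]
    simp
  · rw [D'_d C n β φ δ γ ε ν α μ eN eN1 hprev hmid hnext (n - 1) n (by omega),
      d'_eq_beta C n β φ δ γ ε ν (show n - 1 + 1 = n by omega)]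
    simp
  · rw [D'_d C n β φ δ γ ε ν α μ eN eN1 hprev hmid hnext n (n + 1) rfl,
      d'_eq_mid C n β φ δ γ ε ν rfl]
    simp
  · rw [D'_d C n β φ δ γ ε ν α μ eN eN1 hprev hmid hnext (n + 1) (n + 2) (by omega),
      d'_eq_nu C n β φ δ γ ε ν rfl]
    simp
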